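/- Every AG*-band is a CA-AG-groupoid; that is, if a magma S satisfies the left invertive law, the AG* identity (a·b)·c = b·(a·c), and every element is idempotent (a·a = a for all a), then S satisfies cyclic associativity a·(b·c) = c·(a·b) for all a,b,c. -/
import Mathlib

theorem AG_star_band_is_CA {S : Type*} [Mul S]
    (li : ∀ a b c : S, (a * b) * c = (c * b) * a)
    (ags : ∀ a b c : S, (a * b) * c = b * (a * c))
    (idem : ∀ a : S, a * a = a) :
    ∀ a b c : S, a * (b * c) = c * (a * b) := by
  -- first: absorption a*(a*b) = a*b
  have abs : ∀ a b : S, a * (a * b) = a * b := by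
    intro a b
    rw [← ags, idem]
  -- a*(b*a) = a*b
  have h1 : ∀ a b : S, a * (b * a) = a * b := by
    intro a b
    rw [← ags, li, idem]
  -- commutativity
  have comm : ∀ a b : S, a * b = b * a := by
    intro a b
    have e1 : (a * b) * (b * a) = a * b := by
      rw [ags, h1, ← idem (a*b), ags, abs]
    have e2 : (a * b) * (b * a) = b * a := by
      rw [li]
      have : (b * a) * b = a * b := by rw [ags, idem]
      rw [this, ags, idem]
    rw [← e1, e2]
  -- associativity
  have assoc : ∀ a b c : S, (a * b) * c = a * (b * c) := by
    intro a b c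
    rw [li, comm, comm c b]
  intro a b c
  rw [← assoc, comm]
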